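/- Let X be a rearrangement invariant Banach function space on (0, ∞) whose ideal X_a of order continuous elements is non-trivial. Then for every f ∈ X, dist(f*, X_a) = lim_{n→∞} ‖ f* · χ_{(0, 1/n) ∪ (n, ∞)} ‖_X, where f* is the non-increasing rearrangement of f. -/

import Mathlib

open Filter Topology MeasureTheory Set

/-- A **Banach ideal space** on a measure space `(α, μ)`: a collection of (real-valued)
measurable functions with a complete lattice-compatible norm satisfying the ideal property. -/
structure BanachIdealSpace (α : Type*) [MeasurableSpace α] (μ : Measure α) where
  Mem : (α → ℝ) → Prop
  N : (α → ℝ) → ℝ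
  mem_zero : Mem 0
  mem_add : ∀ f g, Mem f → Mem g → Mem (f + g)
  mem_smul : ∀ (c : ℝ) f, Mem f → Mem (c • f)
  measurable : ∀ f, Mem f → AEMeasurable f μ
  N_nonneg : ∀ f, 0 ≤ N f
  N_zero : N 0 = 0
  N_eq_zero : ∀ f, Mem f → N f = 0 → (∀ᵐ x ∂μ, f x = 0)
  N_add : ∀ f g, Mem f → Mem g → N (f + g) ≤ N f + N g
  N_smul : ∀ (c : ℝ) f, N (c • f) = |c| * N f
  ideal : ∀ f g, AEMeasurable f μ → (∀ᵐ x ∂μ, |f x| ≤ |g x|) → Mem g →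
    Mem f ∧ N f ≤ N g
  complete : ∀ u : ℕ → (α → ℝ), (∀ n, Mem (u n)) →
    (∀ ε : ℝ, 0 < ε → ∃ n₀ : ℕ, ∀ m n, n₀ ≤ m → n₀ ≤ n → N (u m - u n) < ε) →
    ∃ f, Mem f ∧ Tendsto (fun n => N (u n - f)) atTop (𝓝 0)

namespace BanachIdealSpace

variable {α : Type*} [MeasurableSpace α] {μ : Measure α}

/-- Distance (w.r.t. a norm functional `N`) from `f` to a set `S` of functions. -/
noncomputable def distIn (N : (α → ℝ) → ℝ) (f : α → ℝ) (S : Set (α → ℝ)) : ℝ :=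
  sInf ((fun g => N (f - g)) '' S)

/-- The set of **order continuous elements** of a (generalized) function space given by a
membership predicate `Mem` and a norm `N`: those `f` such that every sequence `uₙ` with
`0 ≤ uₙ ≤ |f|` a.e., a.e. non-increasing and converging to `0` a.e., satisfies `N (uₙ) → 0`. -/
def ocSet (μ : Measure α) (Mem : (α → ℝ) → Prop) (N : (α → ℝ) → ℝ) : Set (α → ℝ) :=
  {f | Mem f ∧ ∀ u : ℕ → (α → ℝ), (∀ n, Mem (u n)) →
    (∀ n, ∀ᵐ x ∂μ, 0 ≤ u n x ∧ u n x ≤ |f x|) →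
    (∀ n, ∀ᵐ x ∂μ, u (n + 1) x ≤ u n x) →
    (∀ᵐ x ∂μ, Tendsto (fun n => u n x) atTop (𝓝 0)) →
    Tendsto (fun n => N (u n)) atTop (𝓝 0)}

/-- The ideal `X_a` of order continuous elements of a Banach ideal space `X`. -/
def oc (X : BanachIdealSpace α μ) : Set (α → ℝ) := ocSet μ X.Mem X.N

/-- An **order ideal** of a Banach ideal space: a closed solid linear subspace. -/
structure IsOrderIdeal (X : BanachIdealSpace α μ) (J : Set (α → ℝ)) : Prop where
  subset : ∀ f ∈ J, X.Mem f
  zero : (0 : α → ℝ) ∈ J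
  add : ∀ f g, f ∈ J → g ∈ J → f + g ∈ J
  smul : ∀ (c : ℝ) f, f ∈ J → c • f ∈ J
  solid : ∀ f g, f ∈ J → X.Mem g → (∀ᵐ x ∂μ, |g x| ≤ |f x|) → g ∈ J
  closed : ∀ (u : ℕ → (α → ℝ)) f, (∀ n, u n ∈ J) → X.Mem f →
    Tendsto (fun n => X.N (f - u n)) atTop (𝓝 0) → f ∈ J

/-- The **Fatou property** of a Banach ideal space. -/
def Fatou (X : BanachIdealSpace α μ) : Prop :=
  ∀ (u : ℕ → (α → ℝ)) (f : α → ℝ), (∀ n, X.Mem (u n)) → AEMeasurable f μ →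
    (∀ᵐ x ∂μ, 0 ≤ u 0 x) → (∀ᵐ x ∂μ, Monotone fun n => u n x) →
    (∀ᵐ x ∂μ, Tendsto (fun n => u n x) atTop (𝓝 (f x))) →
    BddAbove (Set.range fun n => X.N (u n)) →
    X.Mem f ∧ Tendsto (fun n => X.N (u n)) atTop (𝓝 (X.N f))

/-- The **semi-Fatou property**: if `0 ≤ uₙ ↑ f ∈ X` then `‖uₙ‖ ↑ ‖f‖`. -/
def SemiFatou (X : BanachIdealSpace α μ) : Prop :=
  ∀ (u : ℕ → (α → ℝ)) (f : α → ℝ), (∀ n, X.Mem (u n)) → X.Mem f →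
    (∀ᵐ x ∂μ, 0 ≤ u 0 x) → (∀ᵐ x ∂μ, Monotone fun n => u n x) →
    (∀ᵐ x ∂μ, Tendsto (fun n => u n x) atTop (𝓝 (f x))) →
    Tendsto (fun n => X.N (u n)) atTop (𝓝 (X.N f))

/-- A Banach ideal space is **rearrangement invariant (symmetric)**: equimeasurable
functions belong to the space simultaneously and have equal norms. -/
def Symmetric (X : BanachIdealSpace α μ) : Prop :=
  ∀ f g, AEMeasurable f μ →
    (∀ lam : ℝ, 0 < lam → μ {x | lam < |f x|} = μ {x | lam < |g x|}) →
    X.Mem g → X.Mem f ∧ X.N f = X.N g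

/-- The **non-increasing rearrangement** of a function `f` (w.r.t. the measure `μ`). -/
noncomputable def rear (μ : Measure α) (f : α → ℝ) (t : ℝ) : ℝ :=
  sInf {lam : ℝ | 0 < lam ∧ μ {x | lam < |f x|} ≤ ENNReal.ofReal t}

/-- A (generalized) function space given by `(Mem, N)` contains a **lattice isometric copy
of `ℓ∞`**: there is a linear map from bounded sequences which preserves absolute values
(hence the lattice operations) and is an isometry for the sup norm on bounded sequences. -/
def HasLatticeCopyLinf (Mem : (α → ℝ) → Prop) (N : (α → ℝ) → ℝ) : Prop :=
  ∃ T : (ℕ → ℝ) → (α → ℝ),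
    (∀ x y, T (x + y) = T x + T y) ∧
    (∀ (c : ℝ) x, T (c • x) = c • T x) ∧
    (∀ x, T (fun n => |x n|) = fun t => |T x t|) ∧
    (∀ x : ℕ → ℝ, BddAbove (Set.range fun n => |x n|) →
      Mem (T x) ∧ N (T x) = ⨆ n, |x n|)

end BanachIdealSpace

open BanachIdealSpace


open ENNReal


lemma exists_subset_volume_eq (S : Set ℝ) (hS : MeasurableSet S) (hfin : volume S ≠ ∞)
    (c : ℝ≥0∞) (hc : c ≤ volume S) :
    ∃ t, t ⊆ S ∧ MeasurableSet t ∧ volume t = c := by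
  rcases eq_or_lt_of_le hc with rfl | hlt
  · exact ⟨S, Subset.rfl, hS, rfl⟩
  rcases eq_or_ne c 0 with rfl | hc0
  · exact ⟨∅, empty_subset _, MeasurableSet.empty, measure_empty⟩
  have hcfin : c ≠ ∞ := fun h => hfin (top_le_iff.mp (h ▸ hc))
  set m : ℝ → ℝ := fun r => (volume (S ∩ Iio r)).toReal with hm
  have hfin' : ∀ r, volume (S ∩ Iio r) ≠ ∞ :=
    fun r => ne_top_of_le_ne_top hfin (measure_mono inter_subset_left)
  have hmono : Monotone m := by
    intro a b hab
    exact ENNReal.toReal_mono (hfin' b) (measure_mono (inter_subset_inter_right _ (Iio_subset_Iio hab)))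
  have hcont : Continuous m := by
    have hlip : LipschitzWith 1 m := by
      apply LipschitzWith.of_dist_le_mul
      intro a b
      wlog h : b ≤ a generalizing a b
      · rw [dist_comm, dist_comm a b]; exact this b a (le_of_not_ge h)
      rw [Real.dist_eq, Real.dist_eq, abs_of_nonneg (sub_nonneg.mpr (hmono h)),
        abs_of_nonneg (sub_nonneg.mpr h), NNReal.coe_one, one_mul]
      have hsub : S ∩ Iio a ⊆ (S ∩ Iio b) ∪ Ico b a := by
        intro x ⟨hxS, hxa⟩
        by_cases hxb : x < b
        · exact Or.inl ⟨hxS, hxb⟩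
        · exact Or.inr ⟨le_of_not_gt hxb, hxa⟩
      have : volume (S ∩ Iio a) ≤ volume (S ∩ Iio b) + ENNReal.ofReal (a - b) := by
        calc volume (S ∩ Iio a) ≤ volume ((S ∩ Iio b) ∪ Ico b a) := measure_mono hsub
          _ ≤ volume (S ∩ Iio b) + volume (Ico b a) := measure_union_le _ _
          _ = volume (S ∩ Iio b) + ENNReal.ofReal (a - b) := by rw [Real.volume_Ico]
      have := ENNReal.toReal_mono (by
        exact ENNReal.add_ne_top.mpr ⟨hfin' b, ENNReal.ofReal_ne_top⟩) this
      rw [ENNReal.toReal_add (hfin' b) ENNReal.ofReal_ne_top,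
        ENNReal.toReal_ofReal (sub_nonneg.mpr h)] at this
      linarith
    exact hlip.continuous
  -- find a with m a ≤ c.toReal
  have h0 : Tendsto (fun n : ℕ => volume (S ∩ Iio (-(n:ℝ)))) atTop (𝓝 (volume (⋂ n : ℕ, S ∩ Iio (-(n:ℝ))))) := by
    apply tendsto_measure_iInter_atTop
    · exact fun n => (hS.inter measurableSet_Iio).nullMeasurableSet
    · intro a b hab
      exact inter_subset_inter_right _ (Iio_subset_Iio (by exact neg_le_neg (by exact_mod_cast hab)))
    · exact ⟨0, hfin' _⟩
  have hiInter : (⋂ n : ℕ, S ∩ Iio (-(n:ℝ))) = ∅ := by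
    ext x
    simp only [mem_iInter, mem_inter_iff, mem_Iio, mem_empty_iff_false, iff_false, not_forall]
    obtain ⟨n, hn⟩ := exists_nat_gt (-x)
    exact ⟨n, fun h => absurd h.2 (by push_neg; linarith)⟩
  rw [hiInter, measure_empty] at h0
  have hctr : 0 < c.toReal := ENNReal.toReal_pos hc0 hcfin
  obtain ⟨n₀, hn₀⟩ := (ENNReal.tendsto_atTop_zero.mp h0) (ENNReal.ofReal (c.toReal/2))
    (by simp [ENNReal.ofReal_pos]; linarith)
  have ha : m (-(n₀:ℝ)) ≤ c.toReal := by
    have := hn₀ n₀ le_rfl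
    have := ENNReal.toReal_mono ENNReal.ofReal_ne_top this
    rw [ENNReal.toReal_ofReal (by linarith)] at this
    simp only [m] at *
    linarith
  -- find b with c.toReal ≤ m b
  have hb : ∃ b : ℝ, c.toReal ≤ m b := by
    have hU : (⋃ n : ℕ, S ∩ Iio (n:ℝ)) = S := by
      ext x
      simp only [mem_iUnion, mem_inter_iff, mem_Iio]
      constructor
      · rintro ⟨n, h, _⟩; exact h
      · intro h; obtain ⟨n, hn⟩ := exists_nat_gt x; exact ⟨n, h, hn⟩
    have hmon : Monotone (fun n : ℕ => S ∩ Iio (n:ℝ)) := by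
      intro a b hab
      exact inter_subset_inter_right _ (Iio_subset_Iio (by exact_mod_cast hab))
    have := hmon.directed_le.measure_iUnion (μ := volume)
    rw [hU] at this
    have : c < ⨆ n : ℕ, volume (S ∩ Iio (n:ℝ)) := this ▸ hlt
    obtain ⟨n, hn⟩ := lt_iSup_iff.mp this
    exact ⟨n, le_of_lt (by
      have := ENNReal.toReal_strict_mono (hfin' _) hn
      simpa [m] using this)⟩
  obtain ⟨b, hbb⟩ := hb
  have hab : -(n₀:ℝ) ≤ max b (-(n₀:ℝ)) := le_max_right _ _
  have hmb : c.toReal ≤ m (max b (-(n₀:ℝ))) := le_trans hbb (hmono (le_max_left _ _))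
  have := intermediate_value_Icc hab hcont.continuousOn
  obtain ⟨r, _, hr⟩ := this ⟨ha, hmb⟩
  refine ⟨S ∩ Iio r, inter_subset_left, hS.inter measurableSet_Iio, ?_⟩
  have : (volume (S ∩ Iio r)).toReal = c.toReal := hr
  exact (ENNReal.toReal_eq_toReal_iff' (hfin' r) hcfin).mp this

section OCLemmas
variable {α : Type*} [MeasurableSpace α] {μ : Measure α} (X : BanachIdealSpace α μ)

lemma N_ae_zero {u : α → ℝ} (hu : AEMeasurable u μ) (h : ∀ᵐ x ∂μ, u x = 0) : X.N u = 0 := by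
  have h2 : ∀ᵐ x ∂μ, |u x| ≤ |(0 : α → ℝ) x| := by
    filter_upwards [h] with x hx; simp [hx]
  have := (X.ideal u 0 hu h2 X.mem_zero).2
  have h3 := X.N_nonneg u
  rw [X.N_zero] at this
  linarith

lemma zero_mem_oc : (0 : α → ℝ) ∈ X.oc := by
  refine ⟨X.mem_zero, fun u hmem hbd _ _ => ?_⟩
  have : ∀ n, X.N (u n) = 0 := fun n => by
    apply N_ae_zero X (X.measurable _ (hmem n))
    filter_upwards [hbd n] with x ⟨h1, h2⟩
    simp only [Pi.zero_apply, abs_zero] at h2; linarith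
  simpa [this] using tendsto_const_nhds


lemma oc_solid' {φ ψ : α → ℝ} (hφ : X.Mem φ) (hψ : ψ ∈ X.oc) (c : ℝ) (hc : 0 < c)
    (hle : ∀ᵐ x ∂μ, |φ x| ≤ c * |ψ x|) : φ ∈ X.oc := by
  refine ⟨hφ, fun u hmem hbd hdec hlim => ?_⟩
  set v : ℕ → α → ℝ := fun n => c⁻¹ • u n with hv
  have hvmem : ∀ n, X.Mem (v n) := fun n => X.mem_smul _ _ (hmem n)
  have hvbd : ∀ n, ∀ᵐ x ∂μ, 0 ≤ v n x ∧ v n x ≤ |ψ x| := by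
    intro n
    filter_upwards [hbd n, hle] with x ⟨h1, h2⟩ h3
    constructor
    · exact mul_nonneg (by positivity) h1
    · rw [hv]; simp only [Pi.smul_apply, smul_eq_mul]
      rw [inv_mul_le_iff₀ hc]
      calc u n x ≤ |φ x| := h2
        _ ≤ c * |ψ x| := h3
  have hvdec : ∀ n, ∀ᵐ x ∂μ, v (n + 1) x ≤ v n x := by
    intro n
    filter_upwards [hdec n] with x h
    simp only [hv, Pi.smul_apply, smul_eq_mul]
    exact mul_le_mul_of_nonneg_left h (by positivity)
  have hvlim : ∀ᵐ x ∂μ, Tendsto (fun n => v n x) atTop (𝓝 0) := by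
    filter_upwards [hlim] with x h
    have := h.const_mul c⁻¹; simp only [mul_zero] at this; exact this
  have := hψ.2 v hvmem hvbd hvdec hvlim
  have h2 : ∀ n, X.N (u n) = c * X.N (v n) := by
    intro n
    have : u n = c • v n := by
      ext x; simp [hv, mul_inv_cancel_left₀ (ne_of_gt hc)]
    rw [this, X.N_smul, abs_of_pos hc]
  simp only [h2]
  simpa using this.const_mul c

lemma oc_mem {φ : α → ℝ} (h : φ ∈ X.oc) : X.Mem φ := h.1

end OCLemmas


noncomputable abbrev μ0 : MeasureTheory.Measure ℝ := MeasureTheory.volume.restrict (Set.Ioi (0:ℝ))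

lemma μ0_apply (S : Set ℝ) : μ0 S = volume (S ∩ Ioi 0) :=
  Measure.restrict_apply' measurableSet_Ioi

lemma μ0_eq_volume {S : Set ℝ} (h : S ⊆ Ioi 0) : μ0 S = volume S := by
  rw [μ0_apply, inter_eq_self_of_subset_left h]



lemma indicator_gt_set (A : Set ℝ) {lam : ℝ} (hlam : 0 < lam) :
    {x | lam < |A.indicator (fun _ => (1:ℝ)) x|} = if lam < 1 then A else ∅ := by
  ext x
  by_cases hx : x ∈ A <;> by_cases h1 : lam < 1 <;>
    simp [indicator_of_mem, indicator_of_notMem, hx, h1, mem_setOf_eq] <;>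
    first | linarith | (intro; linarith)

section Specific
variable (X : BanachIdealSpace ℝ μ0)

lemma indicator_dist_eq {A A' : Set ℝ} (h : μ0 A = μ0 A') :
    ∀ lam : ℝ, 0 < lam → μ0 {x | lam < |A.indicator (fun _ => (1:ℝ)) x|}
      = μ0 {x | lam < |A'.indicator (fun _ => (1:ℝ)) x|} := by
  intro lam hlam
  rw [indicator_gt_set A hlam, indicator_gt_set A' hlam]
  by_cases h1 : lam < 1 <;> simp [h1, h]

lemma mem_indicator_of_subset {B A : Set ℝ} (hmemB : X.Mem (B.indicator (fun _ => (1:ℝ))))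
    (hA : MeasurableSet A) (hsub : A ⊆ B) :
    X.Mem (A.indicator fun _ => (1:ℝ)) ∧
      X.N (A.indicator fun _ => (1:ℝ)) ≤ X.N (B.indicator fun _ => (1:ℝ)) := by
  apply X.ideal _ _ ((measurable_const.indicator hA).aemeasurable)
  · apply Eventually.of_forall
    intro x
    by_cases hx : x ∈ A
    · simp [indicator_of_mem, hx, indicator_of_mem (hsub hx)]
    · simp only [indicator_of_notMem, hx, not_false_iff, abs_zero]
      positivity
  · exact hmemB

lemma exists_B (hXa : ∃ g ∈ X.oc, ¬ (∀ᵐ x ∂μ0, g x = 0)) :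
    ∃ B : Set ℝ, MeasurableSet B ∧ B ⊆ Ioi 0 ∧ 0 < μ0 B ∧ μ0 B < ∞ ∧
      (B.indicator (fun _ => (1:ℝ))) ∈ X.oc := by
  obtain ⟨g, hg, hgne⟩ := hXa
  have hgm : AEMeasurable g μ0 := X.measurable g hg.1
  set g' := hgm.mk g with hg'
  have hgg' : g =ᵐ[μ0] g' := hgm.ae_eq_mk
  have hne' : μ0 {x | g' x ≠ 0} ≠ 0 := by
    intro h
    apply hgne
    have h2 : ∀ᵐ x ∂μ0, g' x = 0 := by
      rw [ae_iff]; simpa using h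
    filter_upwards [hgg', h2] with x h1 h2'; rw [h1, h2']
  have hUnion : {x | g' x ≠ 0} = ⋃ n : ℕ, {x | 1/((n:ℝ)+1) < |g' x|} := by
    ext x
    simp only [mem_setOf_eq, mem_iUnion]
    constructor
    · intro h
      exact exists_nat_one_div_lt (abs_pos.mpr h)
    · rintro ⟨n, hn⟩ h
      rw [h] at hn
      simp only [abs_zero] at hn
      have : (0:ℝ) < 1/((n:ℝ)+1) := by positivity
      linarith
  obtain ⟨k, hk⟩ : ∃ k : ℕ, μ0 {x | 1/((k:ℝ)+1) < |g' x|} ≠ 0 := by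
    by_contra h
    push_neg at h
    exact hne' (hUnion ▸ measure_iUnion_null h)
  set δ : ℝ := 1/((k:ℝ)+1) with hδ
  have hδpos : 0 < δ := by positivity
  set B0 : Set ℝ := {x | δ < |g' x|} ∩ Ioi 0 with hB0
  have hB0m : MeasurableSet B0 :=
    (measurableSet_lt measurable_const hgm.measurable_mk.abs).inter measurableSet_Ioi
  have hB0ne : μ0 B0 ≠ 0 := by
    rw [hB0, μ0_apply, inter_assoc, inter_self, ← μ0_apply]
    exact hk
  obtain ⟨R, hR⟩ : ∃ R : ℕ, μ0 (B0 ∩ Ioo 0 (R:ℝ)) ≠ 0 := by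
    by_contra h
    push_neg at h
    apply hB0ne
    have : B0 = ⋃ n : ℕ, B0 ∩ Ioo 0 (n:ℝ) := by
      ext x
      simp only [mem_iUnion, mem_inter_iff, mem_Ioo]
      constructor
      · intro hx
        obtain ⟨n, hn⟩ := exists_nat_gt x
        exact ⟨n, hx, hx.2, hn⟩
      · rintro ⟨n, hx, _⟩; exact hx
    rw [this]
    exact measure_iUnion_null h
  refine ⟨B0 ∩ Ioo 0 (R:ℝ), hB0m.inter measurableSet_Ioo,
    fun x hx => hx.1.2, pos_iff_ne_zero.mpr hR, ?_, ?_⟩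
  · calc μ0 (B0 ∩ Ioo 0 (R:ℝ)) ≤ μ0 (Ioo 0 (R:ℝ)) := measure_mono inter_subset_right
      _ = volume (Ioo 0 (R:ℝ)) := μ0_eq_volume Ioo_subset_Ioi_self
      _ = ENNReal.ofReal R := by rw [Real.volume_Ioo, sub_zero]
      _ < ∞ := ENNReal.ofReal_lt_top
  · set B := B0 ∩ Ioo 0 (R:ℝ)
    have hbound : ∀ᵐ x ∂μ0, |B.indicator (fun _ => (1:ℝ)) x| ≤ δ⁻¹ * |g x| := by
      filter_upwards [hgg'] with x hx
      by_cases hxB : x ∈ B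
      · rw [indicator_of_mem hxB, hx]
        have : δ < |g' x| := hxB.1.1
        rw [abs_one, ← div_eq_inv_mul, le_div_iff₀ hδpos]
        linarith
      · rw [indicator_of_notMem hxB]
        simp only [abs_zero]
        positivity
    have hmemB : X.Mem (B.indicator (fun _ => (1:ℝ))) := by
      apply (X.ideal _ (δ⁻¹ • g) ((measurable_const.indicator (hB0m.inter measurableSet_Ioo)).aemeasurable) _ (X.mem_smul _ _ hg.1)).1
      filter_upwards [hbound] with x hx
      simpa [abs_mul, abs_of_pos (inv_pos.mpr hδpos)] using hx
    exact oc_solid' X hmemB hg δ⁻¹ (inv_pos.mpr hδpos) hbound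

end Specific

section Specific2
variable (X : BanachIdealSpace ℝ μ0)

lemma small_indicator (hsymm : X.Symmetric) (hXa : ∃ g ∈ X.oc, ¬ (∀ᵐ x ∂μ0, g x = 0)) :
    ∀ ε : ℝ, 0 < ε → ∃ η : ℝ≥0∞, 0 < η ∧ ∀ A : Set ℝ, MeasurableSet A → μ0 A ≤ η →
      X.Mem (A.indicator (fun _ => (1:ℝ))) ∧ X.N (A.indicator (fun _ => (1:ℝ))) ≤ ε := by
  obtain ⟨B, hBm, hBsub, hBpos, hBfin, hBoc⟩ := exists_B X hXa
  intro ε hε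
  -- construct nested sequence D k ⊆ B with μ0 (D k) = μ0 B * 2⁻¹ ^ k
  have hvol : ∀ {S : Set ℝ}, S ⊆ Ioi 0 → μ0 S = volume S := fun h => μ0_eq_volume h
  have hBvol : volume B = μ0 B := (hvol hBsub).symm
  have hstep : ∀ p : {s : Set ℝ // MeasurableSet s ∧ s ⊆ B},
      ∃ q : {s : Set ℝ // MeasurableSet s ∧ s ⊆ B}, q.1 ⊆ p.1 ∧ volume q.1 = volume p.1 / 2 := by
    rintro ⟨D, hDm, hDs⟩
    have hfin : volume D ≠ ∞ := by
      rw [← hvol (hDs.trans hBsub)]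
      exact ne_top_of_le_ne_top hBfin.ne (measure_mono hDs)
    obtain ⟨D', h1, h2, h3⟩ := exists_subset_volume_eq D hDm hfin (volume D / 2)
      (ENNReal.half_le_self)
    exact ⟨⟨D', h2, h1.trans hDs⟩, h1, h3⟩
  choose step hstep1 hstep2 using hstep
  set Dk : ℕ → {s : Set ℝ // MeasurableSet s ∧ s ⊆ B} :=
    fun k => step^[k] ⟨B, hBm, Subset.rfl⟩ with hDk
  have hDksucc : ∀ k, Dk (k+1) = step (Dk k) := by
    intro k; rw [hDk]; simp [Function.iterate_succ_apply']
  have hDkvol : ∀ k, volume (Dk k).1 = volume B * 2⁻¹ ^ k := by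
    intro k
    induction k with
    | zero => simp [hDk]
    | succ n ih =>
      rw [hDksucc, hstep2, ih, pow_succ, div_eq_mul_inv, mul_assoc]
  have hDknested : ∀ k, (Dk (k+1)).1 ⊆ (Dk k).1 := by
    intro k; rw [hDksucc]; exact hstep1 _
  have hDkanti : Antitone (fun k => (Dk k).1) := antitone_nat_of_succ_le hDknested
  -- the indicators tend to 0 in norm
  have hmem : ∀ k, X.Mem ((Dk k).1.indicator (fun _ => (1:ℝ))) :=
    fun k => (mem_indicator_of_subset X hBoc.1 (Dk k).2.1 (Dk k).2.2).1
  have hμiInter : μ0 (⋂ k, (Dk k).1) = 0 := by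
    have hle : ∀ k, μ0 (⋂ j, (Dk j).1) ≤ volume B * 2⁻¹ ^ k := by
      intro k
      rw [← hDkvol, ← hvol ((Dk k).2.2.trans hBsub)]
      exact measure_mono (iInter_subset _ k)
    have htend : Tendsto (fun k : ℕ => volume B * 2⁻¹ ^ k) atTop (𝓝 0) := by
      have h2 : Tendsto (fun k : ℕ => (2⁻¹ : ℝ≥0∞) ^ k) atTop (𝓝 0) :=
        ENNReal.tendsto_pow_atTop_nhds_zero_of_lt_one (by norm_num)
      have := ENNReal.Tendsto.const_mul h2 (Or.inr (hBvol ▸ hBfin.ne))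
      simpa using this
    exact le_antisymm (ge_of_tendsto' htend hle) (by simp)
  have hNk : Tendsto (fun k => X.N ((Dk k).1.indicator (fun _ => (1:ℝ)))) atTop (𝓝 0) := by
    apply hBoc.2 _ hmem
    · intro k
      apply Eventually.of_forall
      intro x
      by_cases hx : x ∈ (Dk k).1
      · simp [indicator_of_mem, hx, indicator_of_mem ((Dk k).2.2 hx)]
      · simp [indicator_of_notMem, hx]
    · intro k
      apply Eventually.of_forall
      intro x
      by_cases hx : x ∈ (Dk (k+1)).1
      · simp [indicator_of_mem, hx, indicator_of_mem (hDknested k hx)]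
      · simp only [indicator_of_notMem, hx, not_false_iff]
        apply indicator_nonneg; intro; norm_num
    · have := measure_eq_zero_iff_ae_notMem.mp hμiInter
      filter_upwards [this] with x hx
      rw [mem_iInter] at hx
      push_neg at hx
      obtain ⟨k₀, hk₀⟩ := hx
      apply tendsto_atTop_of_eventually_const (i₀ := k₀)
      intro k hk
      exact indicator_of_notMem (fun h => hk₀ (hDkanti hk h)) _
  -- pick k with norm ≤ ε
  obtain ⟨k, hkε⟩ := (hNk.eventually (eventually_le_nhds hε)).exists
  refine ⟨μ0 (Dk k).1, ?_, ?_⟩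
  · rw [hvol (((Dk k).2.2).trans hBsub), hDkvol, hBvol]
    exact ENNReal.mul_pos hBpos.ne' (by simp)
  · intro A hA hAle
    have hDkfin : volume (Dk k).1 ≠ ∞ := by
      rw [← hvol ((Dk k).2.2.trans hBsub)]
      exact ne_top_of_le_ne_top hBfin.ne (measure_mono (Dk k).2.2)
    obtain ⟨A', hA'sub, hA'm, hA'vol⟩ := exists_subset_volume_eq (Dk k).1 (Dk k).2.1 hDkfin
      (μ0 A) (by rwa [hvol (((Dk k).2.2).trans hBsub)] at hAle)
    have hA'meas : μ0 A' = μ0 A := by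
      rw [hvol ((hA'sub.trans (Dk k).2.2).trans hBsub)]; exact hA'vol
    have hmemA' := mem_indicator_of_subset X hBoc.1 hA'm ((hA'sub.trans (Dk k).2.2))
    have hsymmA := hsymm (A.indicator (fun _ => (1:ℝ))) (A'.indicator (fun _ => (1:ℝ)))
      ((measurable_const.indicator hA).aemeasurable)
      (indicator_dist_eq hA'meas.symm) hmemA'.1
    refine ⟨hsymmA.1, ?_⟩
    rw [hsymmA.2]
    exact le_trans (mem_indicator_of_subset X (hmem k) hA'm hA'sub).2 hkε

end Specific2

section Specific3
variable (X : BanachIdealSpace ℝ μ0)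

lemma mem_indicator_Ioc (hsymm : X.Symmetric) (hXa : ∃ g ∈ X.oc, ¬ (∀ᵐ x ∂μ0, g x = 0)) :
    ∀ c : ℝ, X.Mem ((Ioc (0:ℝ) c).indicator (fun _ => (1:ℝ))) := by
  obtain ⟨B, hBm, hBsub, hBpos, hBfin, hBoc⟩ := exists_B X hXa
  set q : ℝ := (μ0 B).toReal with hqdef
  have hq : 0 < q := ENNReal.toReal_pos hBpos.ne' hBfin.ne
  have hqB : ENNReal.ofReal q = μ0 B := ENNReal.ofReal_toReal hBfin.ne
  have hBvol : volume B = μ0 B := (μ0_eq_volume hBsub).symm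
  -- step 1 : each interval of length q
  have hstep1 : ∀ a : ℝ, 0 ≤ a → X.Mem ((Ioc a (a+q)).indicator (fun _ => (1:ℝ))) := by
    intro a ha
    obtain ⟨B', hB'sub, hB'm, hB'vol⟩ := exists_subset_volume_eq B hBm (hBvol ▸ hBfin.ne)
      (ENNReal.ofReal q) (hqB ▸ hBvol ▸ le_refl _)
    have hμJ : μ0 (Ioc a (a+q)) = μ0 B' := by
      rw [μ0_eq_volume (fun x hx => lt_of_le_of_lt ha hx.1),
        μ0_eq_volume (hB'sub.trans hBsub), hB'vol, Real.volume_Ioc]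
      congr 1; ring
    have hmemB' := mem_indicator_of_subset X hBoc.1 hB'm hB'sub
    exact (hsymm _ _ ((measurable_const.indicator measurableSet_Ioc).aemeasurable)
      (indicator_dist_eq hμJ) hmemB'.1).1
  -- step 2 : Ioc 0 (k*q) by induction
  have hstep2 : ∀ k : ℕ, X.Mem ((Ioc (0:ℝ) (k*q)).indicator (fun _ => (1:ℝ))) := by
    intro k
    induction k with
    | zero => simp [Set.Ioc_self]; exact X.mem_zero
    | succ n ih =>
      have hun : Ioc (0:ℝ) ((n+1)*q) = Ioc 0 (n*q) ∪ Ioc (n*q) ((n+1)*q) := by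
        rw [Set.Ioc_union_Ioc_eq_Ioc (by positivity) (by nlinarith)]
      push_cast
      rw [hun, Set.indicator_union_of_disjoint (Set.Ioc_disjoint_Ioc_of_le le_rfl)]
      apply X.mem_add _ _ ih
      have := hstep1 (n*q) (by positivity)
      have heq : (n:ℝ)*q + q = (n+1)*q := by ring
      rwa [heq] at this
  intro c
  obtain ⟨k, hk⟩ := exists_nat_ge (c/q)
  have hck : c ≤ k*q := by
    rw [div_le_iff₀ hq] at hk; linarith
  apply (X.ideal _ _ ((measurable_const.indicator measurableSet_Ioc).aemeasurable) _ (hstep2 k)).1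
  apply Eventually.of_forall
  intro x
  by_cases hx : x ∈ Ioc (0:ℝ) c
  · rw [indicator_of_mem hx, indicator_of_mem (Ioc_subset_Ioc_right hck hx)]
  · rw [indicator_of_notMem hx]
    simp only [abs_zero]
    positivity

end Specific3

section Specific4
variable (X : BanachIdealSpace ℝ μ0)

lemma oc_of_bounded_support (hsymm : X.Symmetric) (hXa : ∃ g ∈ X.oc, ¬ (∀ᵐ x ∂μ0, g x = 0))
    {φ : ℝ → ℝ} {E : Set ℝ} {M : ℝ}
    (hφ : X.Mem φ) (hE : MeasurableSet E) (hEfin : μ0 E < ∞)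
    (hmemE : X.Mem (E.indicator (fun _ => (1:ℝ)))) (hM : 0 ≤ M)
    (hbd : ∀ᵐ x ∂μ0, |φ x| ≤ M * E.indicator (fun _ => (1:ℝ)) x) : φ ∈ X.oc := by
  refine ⟨hφ, fun u hmem hbd' hdec hlim => ?_⟩
  have hum : ∀ n, AEMeasurable (u n) μ0 := fun n => X.measurable _ (hmem n)
  set u' : ℕ → ℝ → ℝ := fun n => (hum n).mk (u n) with hu'
  have huu' : ∀ᵐ x ∂μ0, ∀ n, u n x = u' n x := ae_all_iff.mpr fun n => (hum n).ae_eq_mk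
  rw [Metric.tendsto_atTop]
  intro ε'' hε''
  set NE : ℝ := X.N (E.indicator (fun _ => (1:ℝ))) with hNE
  have hNEnn : 0 ≤ NE := X.N_nonneg _
  set ε : ℝ := ε''/(2*(NE+1)) with hεdef
  have hε : 0 < ε := by positivity
  set ε2 : ℝ := ε''/(2*(M+1)) with hε2def
  have hε2 : 0 < ε2 := by positivity
  obtain ⟨η, hη, hsmall⟩ := small_indicator X hsymm hXa ε2 hε2
  -- the decreasing exceptional sets
  set C : ℕ → Set ℝ := fun n => E ∩ ⋃ m : ℕ, {x | ε < u' (n + m) x} with hC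
  have hCm : ∀ n, MeasurableSet (C n) := by
    intro n
    exact hE.inter (MeasurableSet.iUnion fun m =>
      measurableSet_lt measurable_const ((hum (n + m)).measurable_mk))
  have hCanti : Antitone C := by
    apply antitone_nat_of_succ_le
    intro n
    apply inter_subset_inter_right
    intro x hx
    rw [mem_iUnion] at hx ⊢
    obtain ⟨m, hm⟩ := hx
    exact ⟨m + 1, by rwa [show n + (m+1) = n + 1 + m by ring]⟩
  have hCiInter : μ0 (⋂ n, C n) = 0 := by
    rw [measure_eq_zero_iff_ae_notMem]
    filter_upwards [hlim, huu'] with x hx hxu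
    intro hmem'
    rw [mem_iInter] at hmem'
    have : ∀ᶠ n in atTop, u n x < ε := hx.eventually (eventually_lt_nhds hε) |>.mono
      (by intro n h; simpa using h)
    obtain ⟨n₀, hn₀⟩ := eventually_atTop.mp this
    obtain ⟨-, hx2⟩ := hmem' n₀
    rw [mem_iUnion] at hx2
    obtain ⟨m, hm⟩ := hx2
    rw [mem_setOf_eq, ← hxu] at hm
    exact absurd (hn₀ (n₀ + m) (Nat.le_add_right _ _)) (by push_neg; linarith)
  have hCtend : Tendsto (fun n => μ0 (C n)) atTop (𝓝 0) := by
    have := tendsto_measure_iInter_atTop (μ := μ0)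
      (fun n => (hCm n).nullMeasurableSet) hCanti
      ⟨0, (lt_of_le_of_lt (measure_mono inter_subset_left) hEfin).ne⟩
    rwa [hCiInter] at this
  obtain ⟨n₀, hn₀⟩ := (ENNReal.tendsto_atTop_zero.mp hCtend) η hη
  refine ⟨n₀, fun n hn => ?_⟩
  -- define the small set A n
  set A : Set ℝ := E ∩ {x | ε < u' n x} with hA
  have hAm : MeasurableSet A := hE.inter (measurableSet_lt measurable_const (hum n).measurable_mk)
  have hAC : A ⊆ C n := inter_subset_inter_right _ (fun x hx => mem_iUnion.mpr ⟨0, by simpa using hx⟩)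
  have hAsmall := hsmall A hAm (le_trans (measure_mono hAC) (hn₀ n hn))
  -- pointwise bound
  set v : ℝ → ℝ := ε • (E.indicator (fun _ => (1:ℝ))) + M • (A.indicator (fun _ => (1:ℝ))) with hv
  have hvmem : X.Mem v := X.mem_add _ _ (X.mem_smul _ _ hmemE) (X.mem_smul _ _ hAsmall.1)
  have hub : ∀ᵐ x ∂μ0, |u n x| ≤ |v x| := by
    filter_upwards [hbd' n, hbd, huu'] with x h1 h2 h3
    have hvx : v x = ε * E.indicator (fun _ => (1:ℝ)) x + M * A.indicator (fun _ => (1:ℝ)) x := rfl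
    have hvnn : 0 ≤ v x := by
      rw [hvx]
      have := indicator_nonneg (fun (_:ℝ) _ => (zero_le_one : (0:ℝ) ≤ 1)) (s := E) x
      have := indicator_nonneg (fun (_:ℝ) _ => (zero_le_one : (0:ℝ) ≤ 1)) (s := A) x
      positivity
    rw [abs_of_nonneg h1.1, abs_of_nonneg hvnn, hvx]
    by_cases hxE : x ∈ E
    · by_cases hxA : ε < u' n x
      · have hxA' : x ∈ A := ⟨hxE, hxA⟩
        rw [indicator_of_mem hxE, indicator_of_mem hxA']
        calc u n x ≤ |φ x| := h1.2
          _ ≤ M * E.indicator (fun _ => (1:ℝ)) x := h2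
          _ = M := by rw [indicator_of_mem hxE]; ring
          _ ≤ ε * 1 + M * 1 := by linarith
      · have hxA' : x ∉ A := fun h => hxA h.2
        rw [indicator_of_mem hxE, indicator_of_notMem hxA']
        push_neg at hxA
        rw [h3 n]
        linarith
    · have hxA' : x ∉ A := fun h => hxE h.1
      rw [indicator_of_notMem hxE, indicator_of_notMem hxA']
      have : |φ x| ≤ 0 := by rwa [indicator_of_notMem hxE, mul_zero] at h2
      have := h1.2
      linarith [abs_nonneg (φ x)]
  have hNun : X.N (u n) ≤ X.N v := (X.ideal _ _ (hum n) hub hvmem).2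
  have hNv : X.N v ≤ ε * NE + M * ε2 := by
    calc X.N v ≤ X.N (ε • (E.indicator (fun _ => (1:ℝ)))) + X.N (M • (A.indicator (fun _ => (1:ℝ)))) :=
          X.N_add _ _ (X.mem_smul _ _ hmemE) (X.mem_smul _ _ hAsmall.1)
      _ = |ε| * NE + |M| * X.N (A.indicator (fun _ => (1:ℝ))) := by rw [X.N_smul, X.N_smul, hNE]
      _ ≤ ε * NE + M * ε2 := by
          rw [abs_of_pos hε, abs_of_nonneg hM]
          have := hAsmall.2
          nlinarith
  rw [Real.dist_eq, sub_zero, abs_of_nonneg (X.N_nonneg _)]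
  have h1 : ε * NE < ε''/2 := by
    rw [hεdef]
    rw [div_mul_eq_mul_div, div_lt_div_iff₀ (by positivity) (by norm_num)]
    nlinarith
  have h2 : M * ε2 < ε''/2 := by
    rw [hε2def]
    rw [mul_div_assoc']
    rw [div_lt_div_iff₀ (by positivity) (by norm_num)]
    nlinarith
  linarith

end Specific4

section Rear

noncomputable def dd (f : ℝ → ℝ) : ℝ → ℝ≥0∞ := fun s => μ0 {x | s < |f x|}

variable {f : ℝ → ℝ}

lemma rear_eq_sInf (t : ℝ) : rear μ0 f t = sInf {lam | 0 < lam ∧ dd f lam ≤ ENNReal.ofReal t} := rfl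

lemma dd_congr (hf : AEMeasurable f μ0) (s : ℝ) : dd f s = dd (hf.mk f) s := by
  apply measure_congr
  apply eventuallyEq_set.mpr
  filter_upwards [hf.ae_eq_mk] with x hx
  simp only [mem_setOf_eq, hx]

lemma dd_anti : Antitone (dd f) := fun a b hab =>
  measure_mono (fun x hx => lt_of_le_of_lt hab hx)

lemma dd_rc (hf : AEMeasurable f μ0) {lam : ℝ} {c : ℝ≥0∞} (h : c < dd f lam) :
    ∃ s, lam < s ∧ c < dd f s := by
  have key : dd (hf.mk f) lam = ⨆ n : ℕ, dd (hf.mk f) (lam + 1/((n:ℝ)+1)) := by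
    rw [dd]
    have hU : {x | lam < |hf.mk f x|} = ⋃ n : ℕ, {x | lam + 1/((n:ℝ)+1) < |hf.mk f x|} := by
      ext x
      simp only [mem_setOf_eq, mem_iUnion]
      constructor
      · intro hx
        obtain ⟨n, hn⟩ := exists_nat_one_div_lt (sub_pos.mpr hx)
        exact ⟨n, by linarith⟩
      · rintro ⟨n, hn⟩
        have : (0:ℝ) < 1/((n:ℝ)+1) := by positivity
        linarith
    rw [hU]
    apply Directed.measure_iUnion
    intro a b
    rcases le_total a b with hab | hab
    · refine ⟨b, fun x hx => ?_, fun x hx => hx⟩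
      simp only [mem_setOf_eq] at hx ⊢
      have : 1/((b:ℝ)+1) ≤ 1/((a:ℝ)+1) := by
        apply one_div_le_one_div_of_le (by positivity)
        have : (a:ℝ) ≤ b := by exact_mod_cast hab
        linarith
      linarith
    · refine ⟨a, fun x hx => hx, fun x hx => ?_⟩
      simp only [mem_setOf_eq] at hx ⊢
      have : 1/((a:ℝ)+1) ≤ 1/((b:ℝ)+1) := by
        apply one_div_le_one_div_of_le (by positivity)
        have : (b:ℝ) ≤ a := by exact_mod_cast hab
        linarith
      linarith
  rw [dd_congr hf, key, lt_iSup_iff] at h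
  obtain ⟨n, hn⟩ := h
  refine ⟨lam + 1/((n:ℝ)+1), by
    have : (0:ℝ) < 1/((n:ℝ)+1) := by positivity
    linarith, ?_⟩
  rwa [dd_congr hf]

lemma dd_tendsto_zero (hf : AEMeasurable f μ0) (hnd : ∃ s, 0 < s ∧ dd f s ≠ ∞) :
    ∀ t : ℝ, 0 < t → ∃ s, 0 < s ∧ dd f s ≤ ENNReal.ofReal t := by
  obtain ⟨s₀, hs₀pos, hs₀⟩ := hnd
  intro t ht
  have hiInter : (⋂ n : ℕ, {x | s₀ + (n:ℝ) < |hf.mk f x|}) = ∅ := by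
    ext x
    simp only [mem_iInter, mem_setOf_eq, mem_empty_iff_false, iff_false, not_forall, not_lt]
    obtain ⟨n, hn⟩ := exists_nat_gt (|hf.mk f x| - s₀)
    exact ⟨n, by linarith⟩
  have htend : Tendsto (fun n : ℕ => dd (hf.mk f) (s₀ + n)) atTop (𝓝 0) := by
    have := tendsto_measure_iInter_atTop (μ := μ0)
      (s := fun n : ℕ => {x | s₀ + (n:ℝ) < |hf.mk f x|})
      (fun n => (measurableSet_lt measurable_const hf.measurable_mk.abs).nullMeasurableSet)
      (fun a b hab => fun x hx => by
        simp only [mem_setOf_eq] at hx ⊢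
        have : (a:ℝ) ≤ b := by exact_mod_cast hab
        linarith)
      ⟨0, by
        rw [← dd]
        rw [← dd_congr hf]
        simpa using (dd_anti (le_of_eq (by ring) : s₀ ≤ s₀ + (0:ℕ))).trans_lt (lt_top_iff_ne_top.mpr hs₀) |>.ne⟩
    rwa [hiInter, measure_empty] at this
  obtain ⟨n, hn⟩ := (ENNReal.tendsto_atTop_zero.mp htend (ENNReal.ofReal t)
    (by simpa using ht)).imp (fun n h => h n le_rfl)
  exact ⟨s₀ + n, by positivity, by rw [dd_congr hf]; exact hn⟩

lemma rear_nonneg (t : ℝ) : 0 ≤ rear μ0 f t :=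
  Real.sInf_nonneg (fun lam hlam => le_of_lt hlam.1)

lemma rear_lt_mp {t lam : ℝ} (hlam : 0 < lam) (h : lam < rear μ0 f t) :
    ENNReal.ofReal t < dd f lam := by
  by_contra hc
  push_neg at hc
  have : rear μ0 f t ≤ lam := csInf_le ⟨0, fun x hx => le_of_lt hx.1⟩ ⟨hlam, hc⟩
  linarith

lemma rear_lt_mpr (hf : AEMeasurable f μ0)
    (hd : ∀ t : ℝ, 0 < t → ∃ s, 0 < s ∧ dd f s ≤ ENNReal.ofReal t)
    {t lam : ℝ} (ht : 0 < t) (hlam : 0 < lam) (h : ENNReal.ofReal t < dd f lam) :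
    lam < rear μ0 f t := by
  obtain ⟨s, hs1, hs2⟩ := dd_rc hf h
  have hne : {lam' | 0 < lam' ∧ dd f lam' ≤ ENNReal.ofReal t}.Nonempty := by
    obtain ⟨s', h1, h2⟩ := hd t ht
    exact ⟨s', h1, h2⟩
  have : s ≤ rear μ0 f t := by
    apply le_csInf hne
    intro lam' ⟨h1, h2⟩
    by_contra hc
    push_neg at hc
    exact absurd (le_trans (dd_anti hc.le) h2) (not_le.mpr hs2)
  linarith

lemma rear_anti (hd : ∀ t : ℝ, 0 < t → ∃ s, 0 < s ∧ dd f s ≤ ENNReal.ofReal t)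
    {t t' : ℝ} (ht : 0 < t) (htt' : t ≤ t') : rear μ0 f t' ≤ rear μ0 f t := by
  apply csInf_le_csInf ⟨0, fun x hx => le_of_lt hx.1⟩
  · obtain ⟨s, h1, h2⟩ := hd t ht
    exact ⟨s, h1, h2⟩
  · intro lam ⟨h1, h2⟩
    exact ⟨h1, h2.trans (ENNReal.ofReal_le_ofReal htt')⟩

lemma ofReal_lt_set (c : ℝ≥0∞) :
    MeasurableSet {t : ℝ | 0 < t ∧ ENNReal.ofReal t < c} ∧
      volume {t : ℝ | 0 < t ∧ ENNReal.ofReal t < c} = c := by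
  rcases eq_or_ne c ∞ with rfl | hc
  · have hset : {t : ℝ | 0 < t ∧ ENNReal.ofReal t < ∞} = Ioi 0 := by
      ext t; simp [ENNReal.ofReal_lt_top]
    rw [hset]
    exact ⟨measurableSet_Ioi, Real.volume_Ioi⟩
  · have hset : {t : ℝ | 0 < t ∧ ENNReal.ofReal t < c} = Ioo 0 c.toReal := by
      ext t
      simp only [mem_setOf_eq, mem_Ioo]
      constructor
      · rintro ⟨h1, h2⟩
        exact ⟨h1, (ENNReal.ofReal_lt_iff_lt_toReal h1.le hc).mp h2⟩
      · rintro ⟨h1, h2⟩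
        exact ⟨h1, (ENNReal.ofReal_lt_iff_lt_toReal h1.le hc).mpr h2⟩
    rw [hset, Real.volume_Ioo, sub_zero]
    exact ⟨measurableSet_Ioo, ENNReal.ofReal_toReal hc⟩

lemma rear_dist (hf : AEMeasurable f μ0)
    (hd : ∀ t : ℝ, 0 < t → ∃ s, 0 < s ∧ dd f s ≤ ENNReal.ofReal t)
    {lam : ℝ} (hlam : 0 < lam) :
    μ0 {x | lam < |rear μ0 f x|} = μ0 {x | lam < |f x|} := by
  rw [μ0_apply]
  have hset : {x | lam < |rear μ0 f x|} ∩ Ioi 0 = {t : ℝ | 0 < t ∧ ENNReal.ofReal t < dd f lam} := by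
    ext t
    simp only [mem_inter_iff, mem_setOf_eq, mem_Ioi]
    rw [abs_of_nonneg (rear_nonneg t)]
    constructor
    · rintro ⟨h1, h2⟩
      exact ⟨h2, rear_lt_mp hlam h1⟩
    · rintro ⟨h1, h2⟩
      exact ⟨rear_lt_mpr hf hd h1 hlam h2, h1⟩
  rw [hset, (ofReal_lt_set (dd f lam)).2]
  rfl

lemma rear_meas (hf : AEMeasurable f μ0)
    (hd : ∀ t : ℝ, 0 < t → ∃ s, 0 < s ∧ dd f s ≤ ENNReal.ofReal t) :
    AEMeasurable (rear μ0 f) μ0 := by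
  have hae : rear μ0 f =ᵐ[μ0] (Ioi (0:ℝ)).indicator (rear μ0 f) := by
    filter_upwards [ae_restrict_mem measurableSet_Ioi] with x hx
    rw [indicator_of_mem hx]
  apply AEMeasurable.congr _ hae.symm
  apply Measurable.aemeasurable
  apply measurable_of_Ioi
  intro a
  rcases lt_or_ge a 0 with ha | ha
  · have : (Ioi (0:ℝ)).indicator (rear μ0 f) ⁻¹' Ioi a = univ := by
      ext t
      simp only [mem_preimage, mem_Ioi, mem_univ, iff_true]
      calc a < 0 := ha
        _ ≤ _ := indicator_nonneg (fun x _ => rear_nonneg x) t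
    rw [this]; exact MeasurableSet.univ
  · have : (Ioi (0:ℝ)).indicator (rear μ0 f) ⁻¹' Ioi a
        = ⋃ n : ℕ, {t : ℝ | 0 < t ∧ ENNReal.ofReal t < dd f (a + 1/((n:ℝ)+1))} := by
      ext t
      simp only [mem_preimage, mem_Ioi, mem_iUnion, mem_setOf_eq]
      constructor
      · intro h
        by_cases ht : t ∈ Ioi (0:ℝ)
        · rw [indicator_of_mem ht] at h
          obtain ⟨n, hn⟩ := exists_nat_one_div_lt (sub_pos.mpr h)
          refine ⟨n, ht, rear_lt_mp (by positivity) (by linarith)⟩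
        · rw [indicator_of_notMem ht] at h
          linarith
      · rintro ⟨n, h1, h2⟩
        rw [indicator_of_mem (mem_Ioi.mpr h1)]
        have := rear_lt_mpr hf hd h1 (by positivity : (0:ℝ) < a + 1/((n:ℝ)+1)) h2
        have hh : (0:ℝ) < 1/((n:ℝ)+1) := by positivity
        linarith
    rw [this]
    exact MeasurableSet.iUnion fun n => (ofReal_lt_set _).1

end Rear

-- MORE

theorem dist_rearrangement_to_oc_eq_lim
    (X : BanachIdealSpace ℝ (volume.restrict (Set.Ioi (0 : ℝ))))
    (hsymm : X.Symmetric)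
    (hXa : ∃ g ∈ X.oc, ¬ (∀ᵐ x ∂(volume.restrict (Set.Ioi (0 : ℝ))), g x = 0))
    (f : ℝ → ℝ) (hf : X.Mem f) :
    Tendsto
      (fun n : ℕ => X.N (Set.indicator (Set.Ioo (0 : ℝ) (1 / (n : ℝ)) ∪ Set.Ioi (n : ℝ))
        (rear (volume.restrict (Set.Ioi (0 : ℝ))) f)))
      atTop
      (𝓝 (distIn X.N (rear (volume.restrict (Set.Ioi (0 : ℝ))) f) X.oc)) := by
  show Tendsto
      (fun n : ℕ => X.N (Set.indicator (Set.Ioo (0 : ℝ) (1 / (n : ℝ)) ∪ Set.Ioi (n : ℝ))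
        (rear μ0 f))) atTop (𝓝 (distIn X.N (rear μ0 f) X.oc))
  have hbddim : ∀ b ∈ (fun g => X.N (rear μ0 f - g)) '' X.oc, (0:ℝ) ≤ b := by
    rintro b ⟨g, -, rfl⟩; exact X.N_nonneg _
  by_cases hdeg : ∀ s : ℝ, 0 < s → dd f s = ∞
  · -- degenerate case : rear = 0
    have hF0 : rear μ0 f = fun _ => (0:ℝ) := by
      funext t
      rw [rear_eq_sInf]
      have hempty : {lam | 0 < lam ∧ dd f lam ≤ ENNReal.ofReal t} = (∅ : Set ℝ) := by
        ext lam
        simp only [mem_setOf_eq, mem_empty_iff_false, iff_false, not_and]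
        intro hlam h
        rw [hdeg lam hlam] at h
        exact ENNReal.ofReal_ne_top (top_le_iff.mp h)
      rw [hempty, Real.sInf_empty]
    have hzero : (fun _ : ℝ => (0:ℝ)) = (0 : ℝ → ℝ) := rfl
    have hdist : distIn X.N (rear μ0 f) X.oc = 0 := by
      apply le_antisymm
      · apply csInf_le ⟨0, hbddim⟩
        refine ⟨0, zero_mem_oc X, ?_⟩
        rw [hF0, hzero]
        show X.N (0 - 0) = 0
        rw [sub_zero, X.N_zero]
      · exact le_csInf ⟨X.N (rear μ0 f - 0), 0, zero_mem_oc X, rfl⟩ hbddim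
    rw [hdist]
    have hseq : (fun n : ℕ => X.N (Set.indicator (Set.Ioo (0 : ℝ) (1 / (n : ℝ)) ∪ Set.Ioi (n : ℝ))
        (rear μ0 f))) = fun _ => (0:ℝ) := by
      funext n
      rw [hF0, hzero, Set.indicator_zero', X.N_zero]
    rw [hseq]
    exact tendsto_const_nhds
  · -- main case
    push_neg at hdeg
    obtain ⟨s₀, hs₀pos, hs₀⟩ := hdeg
    have hfm : AEMeasurable f μ0 := X.measurable f hf
    have hd := dd_tendsto_zero hfm ⟨s₀, hs₀pos, hs₀⟩
    have hFm : AEMeasurable (rear μ0 f) μ0 := rear_meas hfm hd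
    have hFmem : X.Mem (rear μ0 f) :=
      (hsymm (rear μ0 f) f hFm (fun lam hlam => rear_dist hfm hd hlam) hf).1
    set F : ℝ → ℝ := rear μ0 f with hFdef
    set S : ℕ → Set ℝ := fun n => Ioo (0:ℝ) (1/(n:ℝ)) ∪ Ioi (n:ℝ) with hSdef
    have hSm : ∀ n, MeasurableSet (S n) := fun n => measurableSet_Ioo.union measurableSet_Ioi
    have hSsub : ∀ n, S n ⊆ Ioi (0:ℝ) := by
      intro n x hx
      rcases hx with hx | hx
      · exact hx.1
      · exact lt_of_le_of_lt (Nat.cast_nonneg n) (mem_Ioi.mp hx)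
    have hSanti : ∀ n, S (n+1) ⊆ S n := by
      intro n
      match n with
      | 0 =>
        intro x hx
        right
        rcases hx with hx | hx
        · simpa using hx.1
        · push_cast at hx ⊢
          simp only [mem_Ioi] at hx ⊢
          linarith
      | Nat.succ m =>
        apply union_subset_union
        · apply Ioo_subset_Ioo_right
          apply one_div_le_one_div_of_le
          · push_cast; linarith
          · push_cast; linarith
        · apply Ioi_subset_Ioi
          push_cast; linarith
    have habs_ind : ∀ (s : Set ℝ) (g : ℝ → ℝ) (x : ℝ), |s.indicator g x| ≤ |g x| := by
      intro s g x
      by_cases hx : x ∈ s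
      · rw [indicator_of_mem hx]
      · rw [indicator_of_notMem hx, abs_zero]; exact abs_nonneg _
    have hgmem : ∀ n, X.Mem ((S n).indicator F) ∧ X.N ((S n).indicator F) ≤ X.N F :=
      fun n => X.ideal _ _ (hFm.indicator (hSm n)) (Eventually.of_forall (habs_ind _ _)) hFmem
    have hmemdiff : ∀ {h : ℝ → ℝ}, X.Mem h → X.Mem (F - h) := by
      intro h hh
      have : F - h = F + (-1:ℝ) • h := by
        ext x; simp [sub_eq_add_neg]
      rw [this]
      exact X.mem_add _ _ hFmem (X.mem_smul _ _ hh)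
    set a : ℕ → ℝ := fun n => X.N ((S n).indicator F) with hadef
    have hanti : Antitone a := by
      apply antitone_nat_of_succ_le
      intro n
      apply (X.ideal _ _ (hFm.indicator (hSm (n+1))) ?_ (hgmem n).1).2
      apply Eventually.of_forall
      intro x
      by_cases hx : x ∈ S (n+1)
      · rw [indicator_of_mem hx, indicator_of_mem (hSanti n hx)]
      · rw [indicator_of_notMem hx, abs_zero]; exact abs_nonneg _
    have hbdd : BddBelow (range a) := ⟨0, by rintro _ ⟨n, rfl⟩; exact X.N_nonneg _⟩
    have htendL : Tendsto a atTop (𝓝 (⨅ n, a n)) := tendsto_atTop_ciInf hanti hbdd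
    suffices hLd : distIn X.N F X.oc = ⨅ n, a n by
      rw [hLd]
      exact htendL
    apply le_antisymm
    · -- distIn ≤ L
      apply ge_of_tendsto htendL
      rw [eventually_atTop]
      refine ⟨1, fun n hn => ?_⟩
      have hn1 : (1:ℝ) ≤ (n:ℝ) := by exact_mod_cast hn
      have hinvpos : (0:ℝ) < 1/(n:ℝ) := by positivity
      set M : ℝ := F (1/(n:ℝ)) with hMdef
      have hM : 0 ≤ M := rear_nonneg _
      have hEfin : μ0 (Ioc (0:ℝ) (n:ℝ)) < ∞ := by
        rw [μ0_eq_volume (fun x hx => hx.1), Real.volume_Ioc]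
        exact ENNReal.ofReal_lt_top
      have hbound : ∀ᵐ x ∂μ0, |(F - (S n).indicator F) x| ≤
          M * (Ioc (0:ℝ) (n:ℝ)).indicator (fun _ => (1:ℝ)) x := by
        filter_upwards [ae_restrict_mem measurableSet_Ioi] with x hx
        have hind : 0 ≤ (Ioc (0:ℝ) (n:ℝ)).indicator (fun _ => (1:ℝ)) x :=
          indicator_nonneg (fun _ _ => zero_le_one) x
        by_cases hxS : x ∈ S n
        · rw [Pi.sub_apply, indicator_of_mem hxS, sub_self, abs_zero]
          positivity
        · have hx1 : ¬(0 < x ∧ x < 1/(n:ℝ)) := fun h => hxS (Or.inl h)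
          have hx2 : ¬((n:ℝ) < x) := fun h => hxS (Or.inr h)
          push_neg at hx1 hx2
          have hge : 1/(n:ℝ) ≤ x := hx1 hx
          have hxE : x ∈ Ioc (0:ℝ) (n:ℝ) := ⟨hx, hx2⟩
          rw [Pi.sub_apply, indicator_of_notMem hxS, sub_zero, indicator_of_mem hxE,
            mul_one, abs_of_nonneg (rear_nonneg _)]
          exact rear_anti hd hinvpos hge
      have hoc : (F - (S n).indicator F) ∈ X.oc :=
        oc_of_bounded_support X hsymm hXa (hmemdiff (hgmem n).1) measurableSet_Ioc hEfin
          (mem_indicator_Ioc X hsymm hXa (n:ℝ)) hM hbound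
      apply csInf_le ⟨0, hbddim⟩
      refine ⟨F - (S n).indicator F, hoc, ?_⟩
      show X.N (F - (F - (S n).indicator F)) = a n
      rw [_root_.sub_sub_cancel]
    · -- L ≤ distIn
      show (⨅ n, a n) ≤ sInf ((fun g => X.N (F - g)) '' X.oc)
      have hne : ((fun g => X.N (F - g)) '' X.oc).Nonempty :=
        ⟨X.N (F - 0), ⟨0, zero_mem_oc X, rfl⟩⟩
      apply le_csInf hne
      rintro b ⟨h, hoc, rfl⟩
      have hmemh : X.Mem h := hoc.1
      have hhm : AEMeasurable h μ0 := X.measurable h hmemh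
      have habs_meas : AEMeasurable (fun x => |h x|) μ0 := by
        apply (hhm.measurable_mk.abs.aemeasurable).congr
        filter_upwards [hhm.ae_eq_mk] with x hx
        simp [hx]
      set u : ℕ → ℝ → ℝ := fun n => (S n).indicator (fun x => |h x|) with hudef
      have humeas : ∀ n, AEMeasurable (u n) μ0 := fun n => habs_meas.indicator (hSm n)
      have huabs : ∀ n x, |u n x| ≤ |h x| := by
        intro n x
        calc |u n x| ≤ |(fun x => |h x|) x| := habs_ind _ _ x
          _ = |h x| := abs_abs _
      have humem : ∀ n, X.Mem (u n) :=
        fun n => (X.ideal _ _ (humeas n) (Eventually.of_forall (huabs n)) hmemh).1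
      have hNu : Tendsto (fun n => X.N (u n)) atTop (𝓝 0) := by
        apply hoc.2 u humem
        · intro n
          apply Eventually.of_forall
          intro x
          refine ⟨indicator_nonneg (fun y _ => abs_nonneg (h y)) x, ?_⟩
          calc u n x ≤ |u n x| := le_abs_self _
            _ ≤ |h x| := huabs n x
        · intro n
          apply Eventually.of_forall
          intro x
          by_cases hx : x ∈ S (n+1)
          · rw [hudef]
            simp only
            rw [indicator_of_mem hx, indicator_of_mem (hSanti n hx)]
          · rw [hudef]
            simp only
            rw [indicator_of_notMem hx]
            exact indicator_nonneg (fun y _ => abs_nonneg (h y)) x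
        · filter_upwards [ae_restrict_mem measurableSet_Ioi] with x hx
          have hxpos : (0:ℝ) < x := hx
          obtain ⟨n₁, hn₁⟩ := exists_nat_gt (1/x)
          obtain ⟨n₂, hn₂⟩ := exists_nat_gt x
          apply tendsto_atTop_of_eventually_const (i₀ := max n₁ n₂)
          intro n hn
          have hxn : ¬(x < 1/(n:ℝ)) := by
            push_neg
            have hle : (n₁:ℝ) ≤ (n:ℝ) := by exact_mod_cast le_trans (le_max_left _ _) hn
            have hn1pos : (0:ℝ) < n₁ := lt_trans (by positivity) hn₁
            have : 1/(n:ℝ) ≤ 1/(n₁:ℝ) := one_div_le_one_div_of_le hn1pos hle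
            have h2 : 1/(n₁:ℝ) ≤ x := by
              rw [div_le_iff₀ hn1pos]
              rw [div_lt_iff₀ hx] at hn₁
              linarith
            linarith
          have hxn2 : ¬((n:ℝ) < x) := by
            push_neg
            have : (n₂:ℝ) ≤ (n:ℝ) := by exact_mod_cast le_trans (le_max_right _ _) hn
            linarith
          apply indicator_of_notMem
          rintro (hmem' | hmem')
          · exact hxn hmem'.2
          · exact hxn2 hmem'
      have hbound : ∀ n, a n ≤ X.N (F - h) + X.N (u n) := by
        intro n
        have hdecomp : (S n).indicator F = (S n).indicator (F - h) + (S n).indicator h := by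
          ext x
          by_cases hx : x ∈ S n <;>
            simp [indicator_of_mem, indicator_of_notMem, hx]
        have hm1 : X.Mem ((S n).indicator (F - h)) ∧
            X.N ((S n).indicator (F - h)) ≤ X.N (F - h) :=
          X.ideal _ _ ((X.measurable _ (hmemdiff hmemh)).indicator (hSm n))
            (Eventually.of_forall (habs_ind _ _)) (hmemdiff hmemh)
        have hm2 : X.Mem ((S n).indicator h) ∧
            X.N ((S n).indicator h) ≤ X.N (u n) := by
          apply X.ideal _ _ (hhm.indicator (hSm n)) _ (humem n)
          apply Eventually.of_forall
          intro x
          by_cases hx : x ∈ S n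
          · rw [indicator_of_mem hx, hudef]
            simp only
            rw [indicator_of_mem hx, abs_abs]
          · rw [indicator_of_notMem hx, hudef]
            simp only
            rw [indicator_of_notMem hx]
        calc a n = X.N ((S n).indicator (F - h) + (S n).indicator h) := by rw [hadef]; simp only; rw [hdecomp]
          _ ≤ X.N ((S n).indicator (F - h)) + X.N ((S n).indicator h) := X.N_add _ _ hm1.1 hm2.1
          _ ≤ X.N (F - h) + X.N (u n) := add_le_add hm1.2 hm2.2
      have hlim2 : Tendsto (fun n => X.N (F - h) + X.N (u n)) atTop (𝓝 (X.N (F - h))) := by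
        have := tendsto_const_nhds.add hNu (f := fun _ : ℕ => X.N (F - h)) (x := atTop)
        rwa [add_zero] at this
      exact le_of_tendsto_of_tendsto' htendL hlim2 hbound
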